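/- Let p, q ≥ 2 be integers, μ ∈ ℂ ∖ {0}, and u₀, v₀ ∈ ℂ ∖ {0} with p·|u₀|^{p−1} = 1 and q·|v₀|^{q−1} = 1. Then ∂R/∂r₁(x₀) = 2|μ| sin Θ₂ cos Θ₁ at x₀ = (|u₀|, arg u₀, |v₀|, arg v₀). Consequently, if cos Θ₁ ≠ 0 and cos Θ₂ ≠ 0, then the ratio s = (∂R/∂r₁(x₀))/(∂Q/∂r₁(x₀)) equals tan Θ₂. -/

import Mathlib

lemma rsin_add_sin (x y : ℝ) :
    Real.sin x + Real.sin y = 2 * Real.sin ((x + y) / 2) * Real.cos ((x - y) / 2) := by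
  simpa [sub_eq_add_neg] using Real.sin_sub_sin x (-y)

lemma deriv_aux (A B C : ℝ) (p : ℕ) (x : ℝ) :
    deriv (fun r : ℝ => A * r ^ p + B * r + C) x = A * (p * x ^ (p - 1)) + B := by
  have h : HasDerivAt (fun r : ℝ => A * r ^ p + B * r + C)
      (A * (p * x ^ (p - 1)) + B) x := by
    have h1 := (hasDerivAt_pow p x).const_mul A
    have h2 := (hasDerivAt_id x).const_mul B
    simpa [mul_comm] using (h1.add h2).add_const C
  exact h.deriv

/-- Lemma 3.7: at a point satisfying the singularity conditions,
`∂R/∂r₁ = 2|μ| sin Θ₂ cos Θ₁`, hence `s = (∂R/∂r₁)/(∂Q/∂r₁) = tan Θ₂`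
when `cos Θ₁ ≠ 0` and `cos Θ₂ ≠ 0`. -/
theorem derivative_of_imaginary_part_and_slope
    (p q : ℕ) (hp : 2 ≤ p) (hq : 2 ≤ q) (μ : ℂ) (hμ : μ ≠ 0)
    (u₀ v₀ : ℂ) (hu₀ : u₀ ≠ 0) (hv₀ : v₀ ≠ 0)
    (hu : (p : ℝ) * ‖u₀‖ ^ (p - 1) = 1)
    (hv : (q : ℝ) * ‖v₀‖ ^ (q - 1) = 1)
    (Q R : ℝ → ℝ → ℝ → ℝ → ℝ)
    (hQ : ∀ r₁ θ₁ r₂ θ₂, Q r₁ θ₁ r₂ θ₂ =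
      ‖μ‖ * r₁ ^ p * Real.cos (p * θ₁ + Complex.arg μ)
        + ‖μ‖ * r₁ * Real.cos (-θ₁ + Complex.arg μ)
        + r₂ ^ q * Real.cos (q * θ₂) + r₂ * Real.cos (-θ₂))
    (hR : ∀ r₁ θ₁ r₂ θ₂, R r₁ θ₁ r₂ θ₂ =
      ‖μ‖ * r₁ ^ p * Real.sin (p * θ₁ + Complex.arg μ)
        + ‖μ‖ * r₁ * Real.sin (-θ₁ + Complex.arg μ)
        + r₂ ^ q * Real.sin (q * θ₂) + r₂ * Real.sin (-θ₂))
    (Θ₁ Θ₂ : ℝ)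
    (hΘ₁ : Θ₁ = ((p : ℝ) + 1) / 2 * Complex.arg u₀)
    (hΘ₂ : Θ₂ = ((p : ℝ) - 1) / 2 * Complex.arg u₀ + Complex.arg μ) :
    deriv (fun r₁ => R r₁ (Complex.arg u₀) (‖v₀‖) (Complex.arg v₀)) (‖u₀‖)
        = 2 * ‖μ‖ * Real.sin Θ₂ * Real.cos Θ₁ ∧
    (Real.cos Θ₁ ≠ 0 → Real.cos Θ₂ ≠ 0 →
      deriv (fun r₁ => R r₁ (Complex.arg u₀) (‖v₀‖) (Complex.arg v₀)) (‖u₀‖)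
        / deriv (fun r₁ => Q r₁ (Complex.arg u₀) (‖v₀‖) (Complex.arg v₀)) (‖u₀‖)
        = Real.tan Θ₂) := by
  set c := ‖μ‖ with hc
  set θ := Complex.arg u₀ with hθ
  set a := Complex.arg μ with ha
  set x := ‖u₀‖ with hx
  have hA1 : ((p : ℝ) * θ + a + (-θ + a)) / 2 = Θ₂ := by rw [hΘ₂]; ring
  have hA2 : ((p : ℝ) * θ + a - (-θ + a)) / 2 = Θ₁ := by rw [hΘ₁]; ring
  have hfR : (fun r₁ => R r₁ θ (‖v₀‖) (Complex.arg v₀)) =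
      fun r => (c * Real.sin ((p : ℝ) * θ + a)) * r ^ p
        + (c * Real.sin (-θ + a)) * r
        + (‖v₀‖ ^ q * Real.sin (q * Complex.arg v₀)
            + ‖v₀‖ * Real.sin (-Complex.arg v₀)) := by
    funext r; rw [hR]; ring
  have hfQ : (fun r₁ => Q r₁ θ (‖v₀‖) (Complex.arg v₀)) =
      fun r => (c * Real.cos ((p : ℝ) * θ + a)) * r ^ p
        + (c * Real.cos (-θ + a)) * r
        + (‖v₀‖ ^ q * Real.cos (q * Complex.arg v₀)
            + ‖v₀‖ * Real.cos (-Complex.arg v₀)) := by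
    funext r; rw [hQ]; ring
  have hdR : deriv (fun r₁ => R r₁ θ (‖v₀‖) (Complex.arg v₀)) x
      = 2 * c * Real.sin Θ₂ * Real.cos Θ₁ := by
    rw [hfR, deriv_aux, hu, mul_one]
    rw [← mul_add, rsin_add_sin, hA1, hA2]; ring
  refine ⟨hdR, fun h1 h2 => ?_⟩
  have hdQ : deriv (fun r₁ => Q r₁ θ (‖v₀‖) (Complex.arg v₀)) x
      = 2 * c * Real.cos Θ₂ * Real.cos Θ₁ := by
    rw [hfQ, deriv_aux, hu, mul_one]
    rw [← mul_add, Real.cos_add_cos, hA1, hA2]; ring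
  have hcne : c ≠ 0 := by
    simpa [hc] using norm_ne_zero_iff.mpr hμ
  rw [hdR, hdQ, Real.tan_eq_sin_div_cos]
  field_simp
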